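/- Let ⟨N, S, p, r, μ0⟩ be a finite-horizon Markov reward process with N ≥ 1 and let ⟨N−1, S × S, p†, r†, μ0†⟩ be its state-transition transformation. Then for every time t with 0 ≤ t ≤ N−1 and every pair (x,y) ∈ S × S, the marginal law of the transformed process at time t equals the law of the transition pair of the original process: Σ_{ω† : Fin N → S×S, ω† t = (x,y)} μ0†(ω† 0) · ∏_{s=0}^{N-2} p† (ω† s) (ω† (s+1)) = Σ_{ω : Fin(N+1)→S, ω t = x ∧ ω (t+1) = y} μ0(ω 0) · ∏_{s=0}^{N-1} p (ω s) (ω (s+1)). -/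

import Mathlib

/-- Marginal laws under the state-transition transformation: for a finite-horizon
Markov reward process with horizon `N = M + 1 ≥ 1` and its transformed process
(horizon `M`, state space `S × S`, kernel `p† (w,x) (x',y) = if x' = x then p x y
else 0`, initial distribution `μ0†(x,y) = μ0 x * p x y`), for every time
`t ∈ {0, …, N−1}` and every pair `(x,y)`, the probability that the transformed process
is in state `(x,y)` at time `t` equals the probability that the original process makes
the transition from `x` to `y` between times `t` and `t+1`. -/
theorem stateTransitionTransformation_marginal_eq
    {S : Type} [Fintype S] [Nonempty S] [DecidableEq S]
    (M : ℕ)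
    (p : S → S → ℝ) (hp0 : ∀ x y, 0 ≤ p x y) (hp1 : ∀ x, ∑ y, p x y = 1)
    (r : S → S → ℝ)
    (μ0 : S → ℝ) (hμ0 : ∀ x, 0 ≤ μ0 x) (hμ1 : ∑ x, μ0 x = 1)
    (t : Fin (M + 1)) (x y : S) :
    (∑ ω' ∈ Finset.univ.filter (fun ω' : Fin (M + 1) → S × S => ω' t = (x, y)),
        (μ0 (ω' 0).1 * p (ω' 0).1 (ω' 0).2) *
          ∏ s : Fin M,
            (if (ω' s.succ).1 = (ω' s.castSucc).2
              then p (ω' s.castSucc).2 (ω' s.succ).2 else 0))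
    = ∑ ω ∈ Finset.univ.filter
          (fun ω : Fin (M + 2) → S => ω t.castSucc = x ∧ ω t.succ = y),
        μ0 (ω 0) * ∏ s : Fin (M + 1), p (ω s.castSucc) (ω s.succ) := by
  classical
  set f : (Fin (M + 1) → S × S) → ℝ := fun ω' =>
    (μ0 (ω' 0).1 * p (ω' 0).1 (ω' 0).2) *
      ∏ s : Fin M,
        (if (ω' s.succ).1 = (ω' s.castSucc).2
          then p (ω' s.castSucc).2 (ω' s.succ).2 else 0) with hf
  -- the map from pair-paths to ordinary paths
  set Ψ : (Fin (M + 1) → S × S) → (Fin (M + 2) → S) := fun ω' i =>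
    if h : (i : ℕ) < M + 1 then (ω' ⟨i, h⟩).1 else (ω' (Fin.last M)).2 with hΨ
  -- the map from ordinary paths to pair-paths
  set Φ : (Fin (M + 2) → S) → (Fin (M + 1) → S × S) := fun ω s =>
    (ω s.castSucc, ω s.succ) with hΦ
  -- key computation: for consistent ω', Φ (Ψ ω') = ω'
  have key : ∀ ω' : Fin (M + 1) → S × S,
      (∀ s : Fin M, (ω' s.succ).1 = (ω' s.castSucc).2) →
      ∀ s : Fin (M + 1), (Ψ ω' s.castSucc, Ψ ω' s.succ) = ω' s := by
    intro ω' hcons s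
    simp only [hΨ]
    have h1 : ((s.castSucc : Fin (M + 2)) : ℕ) < M + 1 := s.isLt
    rw [dif_pos h1]
    have e0 : (⟨s.castSucc, h1⟩ : Fin (M + 1)) = s := by ext; simp
    rw [e0]
    by_cases h2 : ((s.succ : Fin (M + 2)) : ℕ) < M + 1
    · rw [dif_pos h2]
      have hs : (s : ℕ) < M := by simpa using h2
      have e1 : (⟨s.succ, h2⟩ : Fin (M + 1)) = (⟨s, hs⟩ : Fin M).succ := by
        ext; simp
      have e2 : (⟨s, hs⟩ : Fin M).castSucc = s := by ext; simp
      rw [e1, hcons ⟨s, hs⟩, e2]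
    · rw [dif_neg h2]
      have hs : s = Fin.last M := by
        ext
        have := s.isLt
        simp only [Fin.val_succ, not_lt] at h2
        simp only [Fin.val_last]
        omega
      rw [hs]
  -- drop the zero (inconsistent) terms on the LHS
  have hzero : ∀ ω' ∈ Finset.univ.filter
      (fun ω' : Fin (M + 1) → S × S => ω' t = (x, y)),
      f ω' ≠ 0 → (∀ s : Fin M, (ω' s.succ).1 = (ω' s.castSucc).2) := by
    intro ω' _ hne s
    by_contra h
    apply hne
    simp only [hf]
    rw [Finset.prod_eq_zero (Finset.mem_univ s) (by simp [h])]
    ring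
  rw [← Finset.sum_filter_of_ne hzero]
  refine Finset.sum_nbij' Ψ Φ ?_ ?_ ?_ ?_ ?_
  · -- Ψ maps into the target set
    intro ω' hω'
    simp only [Finset.mem_filter, Finset.mem_univ, true_and] at hω' ⊢
    obtain ⟨ht, hcons⟩ := hω'
    have := key ω' hcons t
    rw [ht, Prod.mk.injEq] at this
    exact this
  · -- Φ maps into the source set
    intro ω hω
    simp only [Finset.mem_filter, Finset.mem_univ, true_and] at hω ⊢
    refine ⟨?_, ?_⟩
    · simp only [hΦ, Prod.ext_iff, hω.1, hω.2, and_self]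
    · intro s
      simp [hΦ, -Fin.castSucc_succ, Fin.succ_castSucc]
  · -- Φ ∘ Ψ = id on consistent paths
    intro ω' hω'
    simp only [Finset.mem_filter, Finset.mem_univ, true_and] at hω'
    funext s
    exact key ω' hω'.2 s
  · -- Ψ ∘ Φ = id
    intro ω _
    funext i
    simp only [hΨ, hΦ]
    by_cases h : (i : ℕ) < M + 1
    · rw [dif_pos h]
      congr 1
    · rw [dif_neg h]
      congr 1
      ext
      have := i.isLt
      simp only [Fin.val_succ, Fin.val_last]
      omega
  · -- the summands agree
    intro ω' hω'
    simp only [Finset.mem_filter, Finset.mem_univ, true_and] at hω'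
    obtain ⟨ht, hcons⟩ := hω'
    have hkey0 := key ω' hcons 0
    rw [Prod.mk.injEq] at hkey0
    have h0 : Ψ ω' 0 = (ω' 0).1 := by
      have h00 : ((0 : Fin (M + 1)).castSucc : Fin (M + 2)) = 0 := rfl
      rw [← h00]
      exact hkey0.1
    simp only [hf]
    rw [h0]
    rw [Fin.prod_univ_succ (fun s : Fin (M + 1) => p (Ψ ω' s.castSucc) (Ψ ω' s.succ))]
    rw [hkey0.1, hkey0.2, mul_assoc]
    congr 1
    congr 1
    apply Finset.prod_congr rfl
    intro s _
    rw [if_pos (hcons s)]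
    have h1 := key ω' hcons s.succ
    rw [Prod.mk.injEq] at h1
    rw [h1.1, h1.2, hcons s]
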